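/- arXiv:0905.4391 — 2 statements merged into one kernel-verified Lean document; each statement's English description precedes it below -/
import Mathlib

section
/- Let G be the path graph on vertices v_1, v_2, …, v_n (n ≥ 3, with v_j adjacent to v_{j+1} for 1 ≤ j ≤ n−1), with v_out = v_1 and v_in = v_n. Then for any r ∈ ℝ^n, the equation τ_ρ = r is solvable on G if and only if r ∈ Ψ(G). -/
open scoped Classical

noncomputable section

/-- The trace of a walk: the number of occurrences of each vertex along the walk,
viewed as a vector in `ℝ^V`. -/
def trace {V : Type*} [DecidableEq V] {G : SimpleGraph V} {u v : V} (ω : G.Walk u v) : V → ℝ :=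
  fun x => (ω.support.count x : ℝ)

/-- A walk from `vin` to `vout` is proper if it visits `vout` exactly once
(namely as its final vertex). -/
def IsProper {V : Type*} [DecidableEq V] {G : SimpleGraph V} {vin vout : V}
    (ω : G.Walk vin vout) : Prop :=
  ω.support.count vout = 1

/-- The set of traces of proper walks from `vin` to `vout`, as vectors in `ℝ^V`. -/
def traceSet {V : Type*} [DecidableEq V] (G : SimpleGraph V) (vin vout : V) : Set (V → ℝ) :=
  {f | ∃ ω : G.Walk vin vout, IsProper ω ∧ f = trace ω}

/-- `Ψ(G)`: the relative interior (interior with respect to the affine span) of the convex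
hull of the traces of proper walks from `vin` to `vout`. -/
def Psi {V : Type*} [Fintype V] [DecidableEq V] (G : SimpleGraph V) (vin vout : V) :
    Set (V → ℝ) :=
  intrinsicInterior ℝ (convexHull ℝ (traceSet G vin vout))

/-- The matrix `M_β` associated to a graph `G` with distinguished vertices `vin, vout`
and vertex weights `β`. -/
def Mmat {V : Type*} [Fintype V] [DecidableEq V] (G : SimpleGraph V) (vin vout : V)
    (β : V → ℝ) : Matrix V V ℝ :=
  fun v w =>
    if (v = vout ∧ w = vout) ∨ (v = vin ∧ w = vout) then 1
    else if G.Adj v w ∧ v ≠ vout ∧ w ≠ vout then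
      β v / ∑ u ∈ Finset.univ.filter (fun u => G.Adj u w), β u
    else 0

/-- The equation `τ_ρ = r` is solvable on `G`: there is a positive vertex-weight function `β`
with `M_β r = r` and `r(vout) = 1`. -/
def Solvable {V : Type*} [Fintype V] [DecidableEq V] (G : SimpleGraph V) (vin vout : V)
    (r : V → ℝ) : Prop :=
  ∃ β : V → ℝ, (∀ v, 0 < β v) ∧ (Mmat G vin vout β).mulVec r = r ∧ r vout = 1


namespace SPAux

open Set SimpleGraph

/-! ### The reparametrizing affine equivalence -/

def Lmap (n : ℕ) : (Fin n → ℝ) →ₗ[ℝ] (Fin n → ℝ) where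
  toFun x := fun j => x j + if 2 ≤ (j : ℕ) then x ⟨(j:ℕ) - 1, lt_of_le_of_lt (Nat.sub_le _ _) j.isLt⟩ else 0
  map_add' x y := by funext j; by_cases h : 2 ≤ (j:ℕ) <;> simp [h] <;> ring
  map_smul' c x := by funext j; by_cases h : 2 ≤ (j:ℕ) <;> simp [h] <;> ring

lemma Lmap_injective (n : ℕ) : Function.Injective (Lmap n) := by
  rw [← LinearMap.ker_eq_bot, LinearMap.ker_eq_bot']
  intro x hx
  have key : ∀ m : ℕ, ∀ hm : m < n, x ⟨m, hm⟩ = 0 := by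
    intro m
    induction m using Nat.strong_induction_on with
    | _ m ih =>
      intro hm
      have h1 := congrFun hx ⟨m, hm⟩
      simp only [Lmap, LinearMap.coe_mk, AddHom.coe_mk, Pi.zero_apply] at h1
      by_cases h2 : 2 ≤ m
      · rw [if_pos h2] at h1
        have h3 := ih (m-1) (by omega) (by omega)
        rw [h3] at h1; linarith
      · rw [if_neg h2] at h1; linarith
  funext j
  exact key j.1 j.2

def Leq (n : ℕ) : (Fin n → ℝ) ≃ₗ[ℝ] (Fin n → ℝ) :=
  LinearEquiv.ofBijective (Lmap n)
    ⟨Lmap_injective n, LinearMap.injective_iff_surjective.mp (Lmap_injective n)⟩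

def Ahat (n : ℕ) : (Fin n → ℝ) ≃ᵃ[ℝ] (Fin n → ℝ) :=
  (Leq n).toAffineEquiv.trans (AffineEquiv.constVAdd ℝ (Fin n → ℝ) (fun _ => 1))

lemma Ahat_apply (n : ℕ) (x : Fin n → ℝ) (j : Fin n) :
    Ahat n x j = 1 + x j +
      (if 2 ≤ (j:ℕ) then x ⟨(j:ℕ) - 1, lt_of_le_of_lt (Nat.sub_le _ _) j.isLt⟩ else 0) := by
  show (fun _ => (1:ℝ)) j + Lmap n x j = _
  simp only [Lmap, LinearMap.coe_mk, AddHom.coe_mk]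
  ring

/-! ### The model sets -/

def tC (n : ℕ) (j : Fin n) : Set ℝ :=
  if (j:ℕ) = 0 ∨ (j:ℕ) = n-1 then {0} else {y : ℝ | ∃ m : ℕ, (m:ℝ) = y}
def tD (n : ℕ) (j : Fin n) : Set ℝ := if (j:ℕ) = 0 ∨ (j:ℕ) = n-1 then {0} else Ici 0
def tO (n : ℕ) (j : Fin n) : Set ℝ := if (j:ℕ) = 0 ∨ (j:ℕ) = n-1 then {0} else Ioi 0
def Cset (n : ℕ) : Set (Fin n → ℝ) := univ.pi (tC n)
def Dset (n : ℕ) : Set (Fin n → ℝ) := univ.pi (tD n)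
def Oset (n : ℕ) : Set (Fin n → ℝ) := univ.pi (tO n)

lemma natHull : convexHull ℝ {y : ℝ | ∃ m : ℕ, (m:ℝ) = y} = Ici 0 := by
  apply le_antisymm
  · have hsub : {y : ℝ | ∃ m : ℕ, (m:ℝ) = y} ⊆ Ici 0 := by
      rintro y ⟨m, rfl⟩; exact mem_Ici.mpr (Nat.cast_nonneg m)
    exact convexHull_min hsub (convex_Ici 0)
  · intro y hy
    have hmem : ∀ m : ℕ, ((m:ℝ)) ∈ {y : ℝ | ∃ m : ℕ, (m:ℝ) = y} := fun m => ⟨m, rfl⟩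
    have h1 : y ∈ segment ℝ ((⌊y⌋₊ : ℝ)) (((⌊y⌋₊ + 1 : ℕ)) : ℝ) := by
      rw [segment_eq_Icc (by push_cast; linarith [Nat.lt_floor_add_one y])]
      refine ⟨Nat.floor_le hy, by push_cast; linarith [Nat.lt_floor_add_one y]⟩
    exact segment_subset_convexHull (hmem _) (hmem _) h1

lemma hullC (n : ℕ) : convexHull ℝ (Cset n) = Dset n := by
  rw [Cset, convexHull_pi, Dset]
  refine congrArg (Set.pi univ) (funext fun j => ?_)
  by_cases h : (j:ℕ) = 0 ∨ (j:ℕ) = n-1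
  · simp [tC, tD, h, convexHull_singleton]
  · simp only [tC, tD, if_neg h]
    exact natHull

/-! ### Intrinsic interior lemmas -/

lemma mem_intrinsicInterior_iff' {E : Type*} [NormedAddCommGroup E] [NormedSpace ℝ E]
    {s : Set E} {x : E} :
    x ∈ intrinsicInterior ℝ s ↔
      x ∈ affineSpan ℝ s ∧ ∃ U : Set E, IsOpen U ∧ x ∈ U ∧
        U ∩ (affineSpan ℝ s : Set E) ⊆ s := by
  rw [mem_intrinsicInterior]
  constructor
  · rintro ⟨y, hy, rfl⟩
    refine ⟨y.2, ?_⟩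
    rw [mem_interior] at hy
    obtain ⟨t, hts, hto, hyt⟩ := hy
    obtain ⟨U, hU, rfl⟩ := isOpen_induced_iff.mp hto
    refine ⟨U, hU, hyt, ?_⟩
    rintro z ⟨hzU, hz⟩
    exact hts (show (⟨z, hz⟩ : affineSpan ℝ s) ∈ _ from hzU)
  · rintro ⟨hx, U, hU, hxU, hUs⟩
    refine ⟨⟨x, hx⟩, ?_, rfl⟩
    rw [mem_interior]
    exact ⟨Subtype.val ⁻¹' U, fun z hz => hUs ⟨hz, z.2⟩, hU.preimage continuous_subtype_val, hxU⟩

lemma image_intrinsic_subset {E F : Type*} [NormedAddCommGroup E] [NormedSpace ℝ E]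
    [NormedAddCommGroup F] [NormedSpace ℝ F] [FiniteDimensional ℝ E] [FiniteDimensional ℝ F]
    (e : E ≃ᵃ[ℝ] F) (s : Set E) :
    ⇑e '' intrinsicInterior ℝ s ⊆ intrinsicInterior ℝ (⇑e '' s) := by
  rintro _ ⟨z, hz, rfl⟩
  rw [mem_intrinsicInterior_iff'] at hz ⊢
  obtain ⟨hzspan, U, hU, hzU, hUs⟩ := hz
  have hspan : affineSpan ℝ (⇑e '' s) = (affineSpan ℝ s).map e.toAffineMap := by
    have := AffineSubspace.map_span e.toAffineMap s
    rw [AffineEquiv.coe_toAffineMap] at this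
    exact this.symm
  constructor
  · rw [hspan]; exact AffineSubspace.mem_map.mpr ⟨z, hzspan, rfl⟩
  · refine ⟨⇑e.symm ⁻¹' U, hU.preimage e.symm.toAffineMap.continuous_of_finiteDimensional, ?_, ?_⟩
    · simpa using hzU
    · rintro w ⟨hwU, hw⟩
      rw [hspan] at hw
      obtain ⟨y, hy, rfl⟩ := AffineSubspace.mem_map.mp hw
      have hyU : (y : E) ∈ U := by simpa using hwU
      exact ⟨y, hUs ⟨hyU, hy⟩, rfl⟩

lemma image_intrinsic {E F : Type*} [NormedAddCommGroup E] [NormedSpace ℝ E]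
    [NormedAddCommGroup F] [NormedSpace ℝ F] [FiniteDimensional ℝ E] [FiniteDimensional ℝ F]
    (e : E ≃ᵃ[ℝ] F) (s : Set E) :
    intrinsicInterior ℝ (⇑e '' s) = ⇑e '' intrinsicInterior ℝ s := by
  refine le_antisymm ?_ (image_intrinsic_subset e s)
  have h2 := image_intrinsic_subset e.symm (⇑e '' s)
  have h3 : ⇑e.symm '' (⇑e '' s) = s := by
    rw [← Set.image_comp]; simp
  rw [h3] at h2
  intro w hw
  have hmem : e.symm w ∈ intrinsicInterior ℝ s := h2 ⟨w, hw, rfl⟩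
  exact ⟨e.symm w, hmem, by simp⟩

/-! ### Intrinsic interior of the model orthant -/

def Tsub (n : ℕ) (hn : 0 < n) : AffineSubspace ℝ (Fin n → ℝ) where
  carrier := {x | x ⟨0, hn⟩ = 0 ∧ x ⟨n-1, by omega⟩ = 0}
  smul_vsub_vadd_mem' := by
    rintro c p₁ p₂ p₃ ⟨h1, h1'⟩ ⟨h2, h2'⟩ ⟨h3, h3'⟩
    constructor
    · show c * (p₁ _ - p₂ _) + p₃ _ = 0
      rw [h1, h2, h3]; ring
    · show c * (p₁ _ - p₂ _) + p₃ _ = 0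
      rw [h1', h2', h3']; ring

lemma Dset_subset_Tsub (n : ℕ) (hn : 0 < n) : Dset n ⊆ (Tsub n hn : Set (Fin n → ℝ)) := by
  intro x hx
  constructor
  · have := hx ⟨0, hn⟩ (mem_univ _)
    simpa [tD] using this
  · have := hx ⟨n-1, by omega⟩ (mem_univ _)
    simpa [tD] using this

lemma zero_mem_Dset (n : ℕ) : (0 : Fin n → ℝ) ∈ Dset n := by
  intro j _
  simp only [tD]
  split <;> simp

lemma single_mem_Dset (n : ℕ) (j : Fin n) (hj : ¬((j:ℕ) = 0 ∨ (j:ℕ) = n-1)) :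
    (Pi.single j 1 : Fin n → ℝ) ∈ Dset n := by
  intro i _
  simp only [tD]
  by_cases h : (i:ℕ) = 0 ∨ (i:ℕ) = n-1
  · rw [if_pos h]
    have : i ≠ j := by rintro rfl; exact hj h
    simp [Pi.single_apply, this]
  · rw [if_neg h]
    by_cases h2 : i = j <;> simp [Pi.single_apply, h2]

lemma intrinsicD (n : ℕ) (hn : 3 ≤ n) : intrinsicInterior ℝ (Dset n) = Oset n := by
  have hn0 : 0 < n := by omega
  apply le_antisymm
  · intro x hx
    have hxD : x ∈ Dset n := intrinsicInterior_subset hx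
    rw [mem_intrinsicInterior_iff'] at hx
    obtain ⟨hspan, U, hU, hxU, hUs⟩ := hx
    intro j _
    simp only [tO]
    by_cases hj : (j:ℕ) = 0 ∨ (j:ℕ) = n-1
    · rw [if_pos hj]
      have := hxD j (mem_univ _)
      simpa [tD, if_pos hj] using this
    · rw [if_neg hj]
      have hge : (0:ℝ) ≤ x j := by
        have := hxD j (mem_univ _)
        simpa [tD, if_neg hj] using this
      rcases lt_or_eq_of_le hge with h | h
      · exact h
      · exfalso
        obtain ⟨δ, hδ, hball⟩ := Metric.isOpen_iff.mp hU x hxU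
        set ε := δ/2 with hε
        have hεpos : 0 < ε := by positivity
        set v : Fin n → ℝ := (-ε) • (Pi.single (M := fun _ : Fin n => ℝ) j 1) with hv
        set y : Fin n → ℝ := v + x with hy
        have hyU : y ∈ U := by
          apply hball
          have hd : dist y x = ε := by
            rw [hy, dist_eq_norm, add_sub_cancel_right, hv, norm_smul, Pi.norm_single]
            simp [abs_of_pos hεpos]
          exact Metric.mem_ball.mpr (by rw [hd]; linarith)
        have hyspan : y ∈ affineSpan ℝ (Dset n) := by
          have hdir : (Pi.single j 1 : Fin n → ℝ) ∈ (affineSpan ℝ (Dset n)).direction := by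
            have h1 : (Pi.single j 1 : Fin n → ℝ) ∈ affineSpan ℝ (Dset n) :=
              subset_affineSpan ℝ _ (single_mem_Dset n j hj)
            have h2 : (0 : Fin n → ℝ) ∈ affineSpan ℝ (Dset n) :=
              subset_affineSpan ℝ _ (zero_mem_Dset n)
            have := AffineSubspace.vsub_mem_direction h1 h2
            simpa using this
          have hsm : v ∈ (affineSpan ℝ (Dset n)).direction := by
            rw [hv]; exact Submodule.smul_mem _ _ hdir
          have hxspan : x ∈ affineSpan ℝ (Dset n) := subset_affineSpan ℝ _ hxD
          have := AffineSubspace.vadd_mem_of_mem_direction hsm hxspan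
          simpa [hy, vadd_eq_add] using this
        have hyD : y ∈ Dset n := hUs ⟨hyU, hyspan⟩
        have := hyD j (mem_univ _)
        simp only [tD, if_neg hj, mem_Ici, hy, hv] at this
        simp only [Pi.add_apply, Pi.smul_apply, Pi.single_eq_same, smul_eq_mul, mul_one, ← h] at this
        linarith
  · intro x hx
    rw [mem_intrinsicInterior_iff']
    have hxD : x ∈ Dset n := by
      intro j _
      have := hx j (mem_univ _)
      simp only [tO] at this
      simp only [tD]
      split_ifs with h
      · rw [if_pos h] at this; exact this
      · rw [if_neg h] at this; exact le_of_lt (mem_Ioi.mp this)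
    refine ⟨subset_affineSpan ℝ _ hxD,
      univ.pi (fun i => if (i:ℕ) = 0 ∨ (i:ℕ) = n-1 then univ else Ioi 0), ?_, ?_, ?_⟩
    · apply isOpen_set_pi finite_univ
      intro a _
      split_ifs
      · exact isOpen_univ
      · exact isOpen_Ioi
    · intro j _
      simp only
      by_cases h : (j:ℕ) = 0 ∨ (j:ℕ) = n-1
      · rw [if_pos h]; exact mem_univ _
      · rw [if_neg h]
        have := hx j (mem_univ _)
        simpa [tO, if_neg h] using this
    · rintro z ⟨hzU, hzspan⟩
      have hzT : z ∈ (Tsub n hn0 : Set (Fin n → ℝ)) := by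
        have : affineSpan ℝ (Dset n) ≤ Tsub n hn0 := affineSpan_le.mpr (Dset_subset_Tsub n hn0)
        exact this hzspan
      intro j _
      simp only [tD]
      by_cases h : (j:ℕ) = 0 ∨ (j:ℕ) = n-1
      · rw [if_pos h]
        rcases h with h | h
        · have : j = ⟨0, hn0⟩ := Fin.ext h
          rw [this]; exact hzT.1
        · have : j = ⟨n-1, by omega⟩ := Fin.ext h
          rw [this]; exact hzT.2
      · rw [if_neg h]
        have := hzU j (mem_univ _)
        simp only [if_neg h] at this
        exact le_of_lt (mem_Ioi.mp this)

/-! ### Dart counting on the path graph -/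

def upc (n : ℕ) (l : List (pathGraph n).Dart) (j : ℕ) : ℕ :=
  l.countP (fun d => decide (((d.fst : ℕ) = j) ∧ ((d.snd : ℕ) = j + 1)))
def dnc (n : ℕ) (l : List (pathGraph n).Dart) (j : ℕ) : ℕ :=
  l.countP (fun d => decide (((d.fst : ℕ) = j + 1) ∧ ((d.snd : ℕ) = j)))
def fstc (n : ℕ) (l : List (pathGraph n).Dart) (x : ℕ) : ℕ :=
  l.countP (fun d => decide ((d.fst : ℕ) = x))

lemma net {n : ℕ} {a b : Fin n} (w : (pathGraph n).Walk a b) (j : ℕ) :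
    (upc n w.darts j : ℤ) - dnc n w.darts j =
      (if (a:ℕ) ≤ j then 1 else 0) - (if (b:ℕ) ≤ j then 1 else 0) := by
  induction w with
  | nil => simp [upc, dnc]
  | @cons a c b h p ih =>
    have hadj : (a:ℕ) + 1 = (c:ℕ) ∨ (c:ℕ) + 1 = (a:ℕ) := pathGraph_adj.mp h
    simp only [Walk.darts_cons, upc, dnc, List.countP_cons] at *
    rcases hadj with h1 | h1 <;>
    · simp only [decide_eq_true_eq]
      split_ifs <;> push_cast <;> omega

lemma fstc_zero {n : ℕ} {a b : Fin n} (w : (pathGraph n).Walk a b) :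
    fstc n w.darts 0 = upc n w.darts 0 := by
  induction w with
  | nil => simp [fstc, upc]
  | @cons a c b h p ih =>
    have hadj : (a:ℕ) + 1 = (c:ℕ) ∨ (c:ℕ) + 1 = (a:ℕ) := pathGraph_adj.mp h
    simp only [Walk.darts_cons, fstc, upc, List.countP_cons] at *
    rcases hadj with h1 | h1 <;>
    · simp only [decide_eq_true_eq]
      split_ifs <;> omega

lemma fstc_succ {n : ℕ} {a b : Fin n} (w : (pathGraph n).Walk a b) (x : ℕ) :
    fstc n w.darts (x+1) = upc n w.darts (x+1) + dnc n w.darts x := by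
  induction w with
  | nil => simp [fstc, upc, dnc]
  | @cons a c b h p ih =>
    have hadj : (a:ℕ) + 1 = (c:ℕ) ∨ (c:ℕ) + 1 = (a:ℕ) := pathGraph_adj.mp h
    simp only [Walk.darts_cons, fstc, upc, dnc, List.countP_cons] at *
    rcases hadj with h1 | h1 <;>
    · simp only [decide_eq_true_eq]
      split_ifs <;> omega

lemma trace_count {n : ℕ} {a b : Fin n} (w : (pathGraph n).Walk a b) (x : Fin n) :
    w.support.count x = fstc n w.darts (x:ℕ) + (if x = b then 1 else 0) := by
  induction w with
  | nil =>
    rename_i u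
    simp only [Walk.support_nil, Walk.darts_nil, fstc, List.countP_nil, zero_add]
    by_cases h : x = u
    · subst h; simp
    · rw [if_neg h, show (List.count x [u]) = if u = x then 1 else 0 by simp [List.count_cons]]
      rw [if_neg (fun heq : u = x => h heq.symm)]
  | @cons a c b h p ih =>
    simp only [Walk.support_cons, List.count_cons, fstc, Walk.darts_cons, List.countP_cons,
      beq_iff_eq, decide_eq_true_eq] at *
    by_cases h1 : a = x
    · rw [if_pos h1, if_pos ((Fin.val_eq_val a x).mpr h1)]
      omega
    · rw [if_neg h1, if_neg (fun hc => h1 ((Fin.val_eq_val a x).mp hc))]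
      omega

lemma upc_top {n : ℕ} {a b : Fin n} (w : (pathGraph n).Walk a b) :
    upc n w.darts (n-1) = 0 := by
  rw [upc, List.countP_eq_zero]
  intro d _
  simp only [decide_eq_true_eq]
  rintro ⟨-, h2⟩
  have := (d.snd).isLt
  omega

lemma upc_le_fstc {n : ℕ} (l : List (pathGraph n).Dart) (j : ℕ) :
    upc n l j ≤ fstc n l j := by
  apply List.countP_mono_left
  intro d _
  simp only [decide_eq_true_eq]
  tauto

/-! ### Walk constructions -/

lemma upc_append (n : ℕ) (l1 l2 : List (pathGraph n).Dart) (j : ℕ) :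
    upc n (l1 ++ l2) j = upc n l1 j + upc n l2 j := List.countP_append
lemma dnc_append (n : ℕ) (l1 l2 : List (pathGraph n).Dart) (j : ℕ) :
    dnc n (l1 ++ l2) j = dnc n l1 j + dnc n l2 j := List.countP_append
lemma upc_cons (n : ℕ) (d : (pathGraph n).Dart) (l : List (pathGraph n).Dart) (j : ℕ) :
    upc n (d :: l) j = upc n l j + if ((d.fst : ℕ) = j) ∧ ((d.snd : ℕ) = j + 1) then 1 else 0 := by
  rw [upc, List.countP_cons, upc]
  simp
lemma dnc_cons (n : ℕ) (d : (pathGraph n).Dart) (l : List (pathGraph n).Dart) (j : ℕ) :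
    dnc n (d :: l) j = dnc n l j + if ((d.fst : ℕ) = j + 1) ∧ ((d.snd : ℕ) = j) then 1 else 0 := by
  rw [dnc, List.countP_cons, dnc]
  simp

lemma adj_up (n j : ℕ) (hj : j + 1 < n) :
    (pathGraph n).Adj ⟨j, by omega⟩ ⟨j+1, hj⟩ := pathGraph_adj.mpr (Or.inl rfl)

lemma adj_dn (n j : ℕ) (hj : j + 1 < n) :
    (pathGraph n).Adj ⟨j+1, hj⟩ ⟨j, by omega⟩ := pathGraph_adj.mpr (Or.inr rfl)

def bounce (n j : ℕ) (hj : j + 1 < n) : ℕ → (pathGraph n).Walk ⟨j, by omega⟩ ⟨j, by omega⟩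
  | 0 => Walk.nil
  | (k+1) => Walk.cons (adj_up n j hj) (Walk.cons (adj_dn n j hj) (bounce n j hj k))

lemma bounce_upc (n j : ℕ) (hj : j + 1 < n) (k : ℕ) (i : ℕ) :
    upc n (bounce n j hj k).darts i = if i = j then k else 0 := by
  induction k with
  | zero => simp [bounce, upc]
  | succ k ih =>
    rw [bounce, Walk.darts_cons, Walk.darts_cons, upc_cons, upc_cons, ih]
    simp only [Fin.val_mk]
    split_ifs <;> omega

lemma bounce_dnc (n j : ℕ) (hj : j + 1 < n) (k : ℕ) (i : ℕ) :
    dnc n (bounce n j hj k).darts i = if i = j then k else 0 := by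
  induction k with
  | zero => simp [bounce, dnc]
  | succ k ih =>
    rw [bounce, Walk.darts_cons, Walk.darts_cons, dnc_cons, dnc_cons, ih]
    simp only [Fin.val_mk]
    split_ifs <;> omega

def desc (n : ℕ) (b : ℕ → ℕ) (hn : 3 ≤ n) :
    (m : ℕ) → (hm : m ≤ n - 1) → (pathGraph n).Walk ⟨m, by omega⟩ ⟨0, by omega⟩
  | 0, _ => Walk.nil
  | (m+1), hm =>
    ((if h : m + 2 < n then bounce n (m+1) h (b (m+1)) else Walk.nil).append
      (Walk.cons (adj_dn n m (by omega)) (desc n b hn m (by omega))))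

lemma desc_upc (n : ℕ) (b : ℕ → ℕ) (hn : 3 ≤ n) (m : ℕ) (hm : m ≤ n - 1) (i : ℕ) :
    upc n (desc n b hn m hm).darts i = if 1 ≤ i ∧ i ≤ m ∧ i + 2 ≤ n then b i else 0 := by
  induction m with
  | zero =>
    simp only [desc, Walk.darts_nil, upc, List.countP_nil]
    split_ifs <;> omega
  | succ m ih =>
    rcases Nat.lt_or_ge (m+2) n with h2 | h2
    · rw [desc, dif_pos h2, Walk.darts_append, Walk.darts_cons, upc_append, upc_cons,
        bounce_upc, ih (by omega)]
      simp only
      by_cases hi : i = m + 1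
      · subst hi; split_ifs <;> omega
      · split_ifs <;> omega
    · rw [desc, dif_neg (by omega), Walk.darts_append, Walk.darts_cons, upc_append, upc_cons,
        ih (by omega)]
      simp only [Walk.darts_nil, upc, List.countP_nil]
      by_cases hi : i = m + 1
      · subst hi; split_ifs <;> omega
      · split_ifs <;> omega

lemma desc_dnc (n : ℕ) (b : ℕ → ℕ) (hn : 3 ≤ n) (m : ℕ) (hm : m ≤ n - 1) (i : ℕ) :
    dnc n (desc n b hn m hm).darts i =
      (if 1 ≤ i ∧ i ≤ m ∧ i + 2 ≤ n then b i else 0) + (if i < m then 1 else 0) := by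
  induction m with
  | zero =>
    simp only [desc, Walk.darts_nil, dnc, List.countP_nil]
    split_ifs <;> omega
  | succ m ih =>
    rcases Nat.lt_or_ge (m+2) n with h2 | h2
    · rw [desc, dif_pos h2, Walk.darts_append, Walk.darts_cons, dnc_append, dnc_cons,
        bounce_dnc, ih (by omega)]
      simp only [Fin.val_mk]
      by_cases hi : i = m + 1
      · subst hi; split_ifs <;> omega
      · by_cases hi2 : i = m
        · subst hi2; split_ifs <;> omega
        · split_ifs <;> omega
    · rw [desc, dif_neg (by omega), Walk.darts_append, Walk.darts_cons, dnc_append, dnc_cons,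
        ih (by omega)]
      simp only [Walk.darts_nil, dnc, List.countP_nil, Fin.val_mk]
      by_cases hi : i = m + 1
      · subst hi; split_ifs <;> omega
      · by_cases hi2 : i = m
        · subst hi2; split_ifs <;> omega
        · split_ifs <;> omega

/-! ### traceSet = Ahat '' Cset -/

lemma traceSet_eq (n : ℕ) (hn : 3 ≤ n) :
    traceSet (pathGraph n) ⟨n - 1, Nat.sub_lt (Nat.lt_of_lt_of_le (by decide) hn) Nat.one_pos⟩
      ⟨0, Nat.lt_of_lt_of_le (by decide) hn⟩ = ⇑(Ahat n) '' Cset n := by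
  ext f
  constructor
  · rintro ⟨ω, hprop, rfl⟩
    rw [IsProper] at hprop
    have hf0 : fstc n ω.darts 0 = 0 := by
      have h := trace_count ω (⟨0, by omega⟩ : Fin n)
      rw [if_pos rfl] at h
      have h3 : fstc n ω.darts 0 + 1 = 1 := by rw [← h]; exact hprop
      omega
    have hupc0 : upc n ω.darts 0 = 0 := by
      have := upc_le_fstc ω.darts 0
      omega
    have hnet : ∀ j : ℕ, j ≤ n - 2 → dnc n ω.darts j = upc n ω.darts j + 1 := by
      intro j hj
      have h := net ω j
      rw [if_neg (show ¬((((⟨n-1, by omega⟩ : Fin n)):ℕ) ≤ j) by simp only [Fin.val_mk]; omega),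
        if_pos (show (((⟨0, by omega⟩ : Fin n)):ℕ) ≤ j by simp only [Fin.val_mk]; omega)] at h
      omega
    have huptop : upc n ω.darts (n-1) = 0 := upc_top ω
    refine ⟨fun j => if (j:ℕ) = 0 ∨ (j:ℕ) = n-1 then 0 else (upc n ω.darts (j:ℕ) : ℝ), ?_, ?_⟩
    · intro j _
      simp only [tC]
      by_cases h : (j:ℕ) = 0 ∨ (j:ℕ) = n-1
      · rw [if_pos h, if_pos h]; rfl
      · rw [if_neg h, if_neg h]; exact ⟨_, rfl⟩
    · funext p
      rw [Ahat_apply]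
      show _ = ((ω.support.count p : ℕ) : ℝ)
      rw [trace_count ω p]
      rcases Nat.lt_trichotomy (p:ℕ) 1 with hp | hp | hp
      · -- p.val = 0
        have hp0 : (p:ℕ) = 0 := by omega
        have hpeq : p = (⟨0, by omega⟩ : Fin n) := Fin.ext hp0
        have hfp : fstc n ω.darts (p:ℕ) = 0 := by rw [hp0]; exact hf0
        rw [if_pos (Or.inl hp0), if_neg (show ¬(2 ≤ (p:ℕ)) by omega), if_pos hpeq, hfp]
        norm_num
      · -- p.val = 1
        have hne : ¬((p:ℕ) = 0 ∨ (p:ℕ) = n-1) := by omega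
        have hpne : p ≠ (⟨0, by omega⟩ : Fin n) := by
          intro hc
          have : (p:ℕ) = 0 := by rw [hc]
          omega
        rw [if_neg hne, if_neg (show ¬(2 ≤ (p:ℕ)) by omega), if_neg hpne]
        have hfs : fstc n ω.darts (p:ℕ) = upc n ω.darts 1 + dnc n ω.darts 0 := by
          rw [hp]; exact fstc_succ ω 0
        rw [hfs, hnet 0 (by omega), hupc0, hp]
        push_cast
        ring
      · -- 2 ≤ p.val
        have hp2 : 2 ≤ (p:ℕ) := hp
        have hpn : (p:ℕ) ≤ n - 1 := by omega
        have hpne : p ≠ (⟨0, by omega⟩ : Fin n) := by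
          intro hc
          have : (p:ℕ) = 0 := by rw [hc]
          omega
        obtain ⟨i, hi⟩ : ∃ i, (p:ℕ) = i + 1 := ⟨(p:ℕ) - 1, by omega⟩
        have hfs : fstc n ω.darts (p:ℕ) = upc n ω.darts (i+1) + dnc n ω.darts i := by
          rw [hi]; exact fstc_succ ω i
        have hmk : ((⟨(p:ℕ) - 1, lt_of_le_of_lt (Nat.sub_le _ _) p.isLt⟩ : Fin n) : ℕ) = i := by
          simp only [Fin.val_mk]; omega
        rw [if_pos hp2, if_neg hpne, hfs, hnet i (by omega), hmk]
        rcases Nat.lt_or_ge (p:ℕ) (n-1) with hlt | hge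
        · -- interior p
          rw [if_neg (show ¬((p:ℕ) = 0 ∨ (p:ℕ) = n-1) by omega),
            if_neg (show ¬(i = 0 ∨ i = n-1) by omega), hi]
          push_cast
          ring
        · -- p.val = n-1
          have hptop : (p:ℕ) = n - 1 := by omega
          have hup : upc n ω.darts (i+1) = 0 := by
            rw [show i + 1 = n - 1 by omega]; exact huptop
          rw [if_pos (Or.inr hptop), if_neg (show ¬(i = 0 ∨ i = n-1) by omega), hup]
          push_cast
          ring
  · rintro ⟨x, hx, rfl⟩
    have hx0 : x ⟨0, by omega⟩ = 0 := by
      have := hx ⟨0, by omega⟩ (mem_univ _)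
      simpa [tC] using this
    have hxtop : x ⟨n-1, by omega⟩ = 0 := by
      have := hx ⟨n-1, by omega⟩ (mem_univ _)
      simpa [tC] using this
    have hxc : ∀ j : Fin n, ∃ m : ℕ, (¬((j:ℕ) = 0 ∨ (j:ℕ) = n-1) → (m:ℝ) = x j) := by
      intro j
      by_cases hj : (j:ℕ) = 0 ∨ (j:ℕ) = n-1
      · exact ⟨0, fun h => absurd hj h⟩
      · have := hx j (mem_univ _)
        simp only [tC, if_neg hj] at this
        obtain ⟨m, hm⟩ := this
        exact ⟨m, fun _ => hm⟩
    choose g hg using hxc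
    set bfun : ℕ → ℕ := fun i => if h : i < n then g ⟨i, h⟩ else 0 with hbfun
    have hbeq : ∀ i : ℕ, 1 ≤ i → i ≤ n - 2 → ∀ h : i < n, ((bfun i : ℝ)) = x ⟨i, h⟩ := by
      intro i h1 h2 h
      simp only [hbfun, dif_pos h]
      exact hg ⟨i, h⟩ (by simp only [Fin.val_mk]; omega)
    refine ⟨desc n bfun hn (n-1) (le_refl _), ?_, ?_⟩
    · rw [IsProper]
      rw [trace_count (desc n bfun hn (n-1) (le_refl _)) ⟨0, by omega⟩, if_pos rfl]
      have hz : fstc n (desc n bfun hn (n-1) (le_refl _)).darts 0 = 0 := by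
        rw [fstc_zero, desc_upc]
        rw [if_neg (show ¬(1 ≤ 0 ∧ 0 ≤ n-1 ∧ 0+2 ≤ n) by omega)]
      rw [hz]
    · funext p
      show _ = ((((desc n bfun hn (n-1) (le_refl _)).support.count p : ℕ)) : ℝ)
      rw [Ahat_apply, trace_count]
      rcases Nat.lt_trichotomy (p:ℕ) 1 with hp | hp | hp
      · have hp0 : (p:ℕ) = 0 := by omega
        have hpeq : p = (⟨0, by omega⟩ : Fin n) := Fin.ext hp0
        have hz : fstc n (desc n bfun hn (n-1) (le_refl _)).darts (p:ℕ) = 0 := by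
          rw [hp0, fstc_zero, desc_upc, if_neg (show ¬(1 ≤ 0 ∧ 0 ≤ n-1 ∧ 0+2 ≤ n) by omega)]
        rw [if_pos hpeq, if_neg (show ¬(2 ≤ (p:ℕ)) by omega), hz, hpeq, hx0]
        norm_num
      · -- p.val = 1
        have hpne : p ≠ (⟨0, by omega⟩ : Fin n) := by
          intro hc
          have : (p:ℕ) = 0 := by rw [hc]
          omega
        rw [if_neg hpne, if_neg (show ¬(2 ≤ (p:ℕ)) by omega)]
        have hfs : fstc n (desc n bfun hn (n-1) (le_refl _)).darts (p:ℕ) =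
            upc n (desc n bfun hn (n-1) (le_refl _)).darts 1 +
            dnc n (desc n bfun hn (n-1) (le_refl _)).darts 0 := by
          rw [hp]; exact fstc_succ _ 0
        rw [hfs, desc_upc, desc_dnc, if_pos (show 1 ≤ 1 ∧ 1 ≤ n-1 ∧ 1+2 ≤ n by omega),
          if_neg (show ¬(1 ≤ 0 ∧ 0 ≤ n-1 ∧ 0+2 ≤ n) by omega),
          if_pos (show 0 < n-1 by omega)]
        have hpeq : p = (⟨1, by omega⟩ : Fin n) := Fin.ext (by simp only [Fin.val_mk]; omega)
        have hxp : x p = (bfun 1 : ℝ) := by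
          rw [hpeq]; exact (hbeq 1 (by omega) (by omega) (by omega)).symm
        rw [hxp]
        push_cast
        ring
      · -- 2 ≤ p.val
        have hp2 : 2 ≤ (p:ℕ) := hp
        have hpn : (p:ℕ) ≤ n - 1 := by omega
        have hpne : p ≠ (⟨0, by omega⟩ : Fin n) := by
          intro hc
          have : (p:ℕ) = 0 := by rw [hc]
          omega
        obtain ⟨i, hi⟩ : ∃ i, (p:ℕ) = i + 1 := ⟨(p:ℕ) - 1, by omega⟩
        have hfs : fstc n (desc n bfun hn (n-1) (le_refl _)).darts (p:ℕ) =
            upc n (desc n bfun hn (n-1) (le_refl _)).darts (i+1) +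
            dnc n (desc n bfun hn (n-1) (le_refl _)).darts i := by
          rw [hi]; exact fstc_succ _ i
        have hmk : ((⟨(p:ℕ) - 1, lt_of_le_of_lt (Nat.sub_le _ _) p.isLt⟩ : Fin n) : ℕ) = i := by
          simp only [Fin.val_mk]; omega
        have hx1 : x ⟨(p:ℕ) - 1, lt_of_le_of_lt (Nat.sub_le _ _) p.isLt⟩ = (bfun i : ℝ) := by
          have h1 : 1 ≤ i := by omega
          have heq : (⟨(p:ℕ) - 1, lt_of_le_of_lt (Nat.sub_le _ _) p.isLt⟩ : Fin n)
              = (⟨i, by omega⟩ : Fin n) := Fin.ext (by simp only [Fin.val_mk]; omega)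
          rw [heq]
          exact (hbeq i h1 (by omega) (by omega)).symm
        rw [if_pos hp2, if_neg hpne, hfs, desc_upc, desc_dnc, hx1]
        rcases Nat.lt_or_ge (p:ℕ) (n-1) with hlt | hge
        · rw [if_pos (show 1 ≤ i+1 ∧ i+1 ≤ n-1 ∧ i+1+2 ≤ n by omega),
            if_pos (show 1 ≤ i ∧ i ≤ n-1 ∧ i+2 ≤ n by omega),
            if_pos (show i < n-1 by omega)]
          have hpeq : p = (⟨i+1, by omega⟩ : Fin n) := Fin.ext (by simp only [Fin.val_mk]; omega)
          have hxp : x p = (bfun (i+1) : ℝ) := by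
            rw [hpeq]; exact (hbeq (i+1) (by omega) (by omega) (by omega)).symm
          rw [hxp]
          push_cast
          ring
        · have hptop : (p:ℕ) = n - 1 := by omega
          have hpeq : p = (⟨n-1, by omega⟩ : Fin n) := Fin.ext hptop
          rw [if_neg (show ¬(1 ≤ i+1 ∧ i+1 ≤ n-1 ∧ i+1+2 ≤ n) by omega),
            if_pos (show 1 ≤ i ∧ i ≤ n-1 ∧ i+2 ≤ n by omega),
            if_pos (show i < n-1 by omega), hpeq, hxtop]
          push_cast
          ring

/-! ### Solvability -/

lemma p0 (n : ℕ) (hn : 3 ≤ n) : 0 < n := Nat.lt_of_lt_of_le (by decide) hn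

lemma p1 (n : ℕ) (hn : 3 ≤ n) : n - 1 < n := Nat.sub_lt (p0 n hn) Nat.one_pos

def Bsum (n : ℕ) (β : Fin n → ℝ) (w : Fin n) : ℝ :=
  ∑ u ∈ Finset.univ.filter (fun u => (pathGraph n).Adj u w), β u

lemma Bsum_0 (n : ℕ) (hn : 3 ≤ n) (β : Fin n → ℝ) :
    Bsum n β ⟨0, p0 n hn⟩ = β ⟨1, by omega⟩ := by
  rw [Bsum, show Finset.univ.filter (fun u => (pathGraph n).Adj u ⟨0, p0 n hn⟩)
      = {(⟨1, by omega⟩ : Fin n)} from ?_, Finset.sum_singleton]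
  ext u
  simp only [Finset.mem_filter, Finset.mem_univ, true_and, Finset.mem_singleton,
    pathGraph_adj, Fin.ext_iff, Fin.val_mk]
  omega

lemma Bsum_top (n : ℕ) (hn : 3 ≤ n) (β : Fin n → ℝ) :
    Bsum n β ⟨n-1, p1 n hn⟩ = β ⟨n-2, by omega⟩ := by
  rw [Bsum, show Finset.univ.filter (fun u => (pathGraph n).Adj u ⟨n-1, p1 n hn⟩)
      = {(⟨n-2, by omega⟩ : Fin n)} from ?_, Finset.sum_singleton]
  ext u
  simp only [Finset.mem_filter, Finset.mem_univ, true_and, Finset.mem_singleton,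
    pathGraph_adj, Fin.ext_iff, Fin.val_mk]
  have := u.isLt
  omega

lemma Bsum_mid (n : ℕ) (hn : 3 ≤ n) (β : Fin n → ℝ) (j : ℕ) (h1 : 1 ≤ j) (h2 : j ≤ n-2) :
    Bsum n β ⟨j, by omega⟩ = β ⟨j-1, by omega⟩ + β ⟨j+1, by omega⟩ := by
  rw [Bsum, show Finset.univ.filter (fun u => (pathGraph n).Adj u ⟨j, by omega⟩)
      = {(⟨j-1, by omega⟩ : Fin n), (⟨j+1, by omega⟩ : Fin n)} from ?_,
    Finset.sum_pair (by simp only [ne_eq, Fin.ext_iff, Fin.val_mk]; omega)]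
  ext u
  simp only [Finset.mem_filter, Finset.mem_univ, true_and, Finset.mem_insert,
    Finset.mem_singleton, pathGraph_adj, Fin.ext_iff, Fin.val_mk]
  omega

lemma Bsum_pos (n : ℕ) (hn : 3 ≤ n) (β : Fin n → ℝ) (hβ : ∀ v, 0 < β v) (w : Fin n) :
    0 < Bsum n β w := by
  rcases Nat.lt_trichotomy (w:ℕ) 1 with h | h | h
  · have : w = (⟨0, by omega⟩ : Fin n) := Fin.ext (by simp only [Fin.val_mk]; omega)
    rw [this, Bsum_0 n hn]; exact hβ _
  · have hw : (w:ℕ) ≤ n - 2 := by have := w.isLt; omega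
    have : w = (⟨(w:ℕ), w.isLt⟩ : Fin n) := Fin.ext rfl
    rw [this, Bsum_mid n hn β (w:ℕ) (by omega) hw]
    have := hβ (⟨(w:ℕ)-1, by omega⟩ : Fin n)
    have := hβ (⟨(w:ℕ)+1, by omega⟩ : Fin n)
    linarith
  · rcases Nat.lt_or_ge (w:ℕ) (n-1) with h2 | h2
    · have : w = (⟨(w:ℕ), w.isLt⟩ : Fin n) := Fin.ext rfl
      rw [this, Bsum_mid n hn β (w:ℕ) (by omega) (by omega)]
      have := hβ (⟨(w:ℕ)-1, by omega⟩ : Fin n)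
      have := hβ (⟨(w:ℕ)+1, by omega⟩ : Fin n)
      linarith
    · have : w = (⟨n-1, by omega⟩ : Fin n) := Fin.ext (by simp only [Fin.val_mk]; have := w.isLt; omega)
      rw [this, Bsum_top n hn]; exact hβ _

lemma row_0 (n : ℕ) (hn : 3 ≤ n) (β r : Fin n → ℝ) :
    (Mmat (pathGraph n) ⟨n-1, p1 n hn⟩ ⟨0, p0 n hn⟩ β).mulVec r ⟨0, p0 n hn⟩
      = r ⟨0, p0 n hn⟩ := by
  rw [Matrix.mulVec, dotProduct]
  rw [Finset.sum_eq_single_of_mem (⟨0, p0 n hn⟩ : Fin n) (Finset.mem_univ _) ?_]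
  · rw [Mmat, if_pos (Or.inl ⟨rfl, rfl⟩), one_mul]
  · intro c _ hc
    rw [Mmat]
    rw [if_neg (by
      rintro (⟨h1, h2⟩ | ⟨h1, h2⟩)
      · exact hc h2
      · have := congrArg Fin.val h1; simp only [Fin.val_mk] at this; omega)]
    rw [if_neg (by
      rintro ⟨hadj, hv, hw⟩
      exact hv rfl)]
    exact zero_mul _

lemma row_top (n : ℕ) (hn : 3 ≤ n) (β r : Fin n → ℝ) :
    (Mmat (pathGraph n) ⟨n-1, p1 n hn⟩ ⟨0, p0 n hn⟩ β).mulVec r ⟨n-1, p1 n hn⟩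
      = r ⟨0, p0 n hn⟩
        + β ⟨n-1, p1 n hn⟩ / Bsum n β ⟨n-2, by omega⟩ * r ⟨n-2, by omega⟩ := by
  rw [Matrix.mulVec, dotProduct]
  rw [Finset.sum_eq_add_of_mem (⟨0, p0 n hn⟩ : Fin n) (⟨n-2, by omega⟩ : Fin n)
    (Finset.mem_univ _) (Finset.mem_univ _)
    (by simp only [ne_eq, Fin.ext_iff, Fin.val_mk]; omega) ?_]
  · rw [Mmat, if_pos (Or.inr ⟨rfl, rfl⟩), one_mul]
    rw [Mmat, if_neg (by
      rintro (⟨h1, h2⟩ | ⟨h1, h2⟩) <;>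
      · have := congrArg Fin.val h2; simp only [Fin.val_mk] at this; omega)]
    rw [if_pos ⟨by rw [pathGraph_adj]; simp only [Fin.val_mk]; omega,
      by simp only [ne_eq, Fin.ext_iff, Fin.val_mk]; omega,
      by simp only [ne_eq, Fin.ext_iff, Fin.val_mk]; omega⟩]
    rfl
  · intro c _ ⟨hc1, hc2⟩
    rw [Mmat]
    rw [if_neg (by rintro (⟨h1, h2⟩ | ⟨h1, h2⟩) <;> exact hc1 h2)]
    rw [if_neg (by
      rintro ⟨hadj, hv, hw⟩
      rw [pathGraph_adj] at hadj
      simp only [Fin.val_mk] at hadj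
      rcases hadj with h | h
      · omega
      · exact hc2 (Fin.ext (by simp only [Fin.val_mk]; omega)))]
    exact zero_mul _

lemma row_mid (n : ℕ) (hn : 3 ≤ n) (β r : Fin n → ℝ) (j : ℕ) (h1 : 1 ≤ j) (h2 : j ≤ n-2) :
    (Mmat (pathGraph n) ⟨n-1, p1 n hn⟩ ⟨0, p0 n hn⟩ β).mulVec r ⟨j, by omega⟩
      = (if 2 ≤ j then β ⟨j, by omega⟩ / Bsum n β ⟨j-1, by omega⟩ * r ⟨j-1, by omega⟩ else 0)
        + β ⟨j, by omega⟩ / Bsum n β ⟨j+1, by omega⟩ * r ⟨j+1, by omega⟩ := by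
  rw [Matrix.mulVec, dotProduct]
  rw [Finset.sum_eq_add_of_mem (⟨j-1, by omega⟩ : Fin n) (⟨j+1, by omega⟩ : Fin n)
    (Finset.mem_univ _) (Finset.mem_univ _)
    (by simp only [ne_eq, Fin.ext_iff, Fin.val_mk]; omega) ?_]
  · congr 1
    · -- entry at j-1
      by_cases hj2 : 2 ≤ j
      · rw [if_pos hj2, Mmat, if_neg (by
          rintro (⟨ha, hb⟩ | ⟨ha, hb⟩) <;>
          · have := congrArg Fin.val ha; simp only [Fin.val_mk] at this; omega)]
        rw [if_pos ⟨by rw [pathGraph_adj]; simp only [Fin.val_mk]; omega,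
          by simp only [ne_eq, Fin.ext_iff, Fin.val_mk]; omega,
          by simp only [ne_eq, Fin.ext_iff, Fin.val_mk]; omega⟩]
        rfl
      · rw [if_neg hj2, Mmat, if_neg (by
          rintro (⟨ha, hb⟩ | ⟨ha, hb⟩) <;>
          · have := congrArg Fin.val ha; simp only [Fin.val_mk] at this; omega)]
        rw [if_neg (by
          rintro ⟨hadj, hv, hw⟩
          exact hw (Fin.ext (by simp only [Fin.val_mk]; omega)))]
        exact zero_mul _
    · rw [Mmat, if_neg (by
        rintro (⟨ha, hb⟩ | ⟨ha, hb⟩) <;>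
        · have := congrArg Fin.val ha; simp only [Fin.val_mk] at this; omega)]
      rw [if_pos ⟨by rw [pathGraph_adj]; exact Or.inl rfl,
        by simp only [ne_eq, Fin.ext_iff, Fin.val_mk]; omega,
        by simp only [ne_eq, Fin.ext_iff, Fin.val_mk]; omega⟩]
      rfl
  · intro c _ ⟨hc1, hc2⟩
    rw [Mmat]
    rw [if_neg (by
      rintro (⟨ha, hb⟩ | ⟨ha, hb⟩) <;>
      · have := congrArg Fin.val ha; simp only [Fin.val_mk] at this; omega)]
    rw [if_neg (by
      rintro ⟨hadj, hv, hw⟩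
      rw [pathGraph_adj] at hadj
      simp only [Fin.val_mk] at hadj
      rcases hadj with h | h
      · exact hc2 (Fin.ext (by simp only [Fin.val_mk]; omega))
      · exact hc1 (Fin.ext (by simp only [Fin.val_mk]; omega)))]
    exact zero_mul _

def betaN (b : ℕ → ℝ) : ℕ → ℝ
  | 0 => 1
  | 1 => 1
  | (j+2) => betaN b j * b (j+1) / (1 + b j)

lemma solvable_mp (n : ℕ) (hn : 3 ≤ n) (r : Fin n → ℝ)
    (hs : Solvable (pathGraph n) ⟨n - 1, p1 n hn⟩ ⟨0, p0 n hn⟩ r) :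
    r ∈ ⇑(Ahat n) '' Oset n := by
  obtain ⟨β, hβ, hM, hr0⟩ := hs
  set βv : ℕ → ℝ := fun k => if h : k < n then β ⟨k,h⟩ else 1 with hβvdef
  set rv : ℕ → ℝ := fun k => if h : k < n then r ⟨k,h⟩ else 0 with hrvdef
  set Sv : ℕ → ℝ := fun k => if k = 0 then βv 1 else if k = n-1 then βv (n-2)
    else βv (k-1) + βv (k+1) with hSvdef
  set bv : ℕ → ℝ := fun k => if 1 ≤ k ∧ k ≤ n-2 then rv k * (βv (k+1) / Sv k) else 0 with hbvdef
  have hβe : ∀ m (h : m < n), β ⟨m, h⟩ = βv m := fun m h => by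
    simp only [hβvdef, dif_pos h]
  have hre : ∀ m (h : m < n), r ⟨m, h⟩ = rv m := fun m h => by
    simp only [hrvdef, dif_pos h]
  have hβvpos : ∀ k, 0 < βv k := by
    intro k
    simp only [hβvdef]
    split_ifs
    · exact hβ _
    · exact one_pos
  have hSvz : ∀ k, 1 ≤ k → k ≤ n-2 → Sv k = βv (k-1) + βv (k+1) := by
    intro k h1 h2
    simp only [hSvdef]
    rw [if_neg (by omega), if_neg (by omega)]
  have hSvpos : ∀ k, 0 < Sv k := by
    intro k
    simp only [hSvdef]
    split_ifs
    · exact hβvpos 1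
    · exact hβvpos (n-2)
    · have := hβvpos (k-1); have := hβvpos (k+1); linarith
  have hbv0 : bv 0 = 0 := by simp only [hbvdef]; rw [if_neg (by omega)]
  have hbvtop : bv (n-1) = 0 := by simp only [hbvdef]; rw [if_neg (by omega)]
  have hBS : ∀ m (h : m < n), Bsum n β ⟨m, h⟩ = Sv m := by
    intro m h
    by_cases hm0 : m = 0
    · subst hm0
      rw [Bsum_0 n hn β, hβe 1 (by omega)]
      simp only [hSvdef]
      rw [if_true]
    by_cases hmt : m = n-1
    · subst hmt
      rw [Bsum_top n hn β, hβe (n-2) (by omega)]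
      simp only [hSvdef]
      rw [if_neg (by omega), if_true]
    · rw [Bsum_mid n hn β m (by omega) (by omega), hβe (m-1) (by omega), hβe (m+1) (by omega)]
      exact (hSvz m (by omega) (by omega)).symm
  have hrow_mid : ∀ k, 1 ≤ k → k ≤ n-2 →
      (if 2 ≤ k then βv k / Sv (k-1) * rv (k-1) else 0)
        + βv k / Sv (k+1) * rv (k+1) = rv k := by
    intro k h1 h2
    have h := congrFun hM ⟨k, by omega⟩
    rw [row_mid n hn β r k h1 h2] at h
    simp only [hBS, hβe, hre] at h
    exact h
  have hrv0 : rv 0 = 1 := by rw [← hre 0 (by omega)]; exact hr0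
  have hrow_top : 1 + βv (n-1) / Sv (n-2) * rv (n-2) = rv (n-1) := by
    have h := congrFun hM ⟨n-1, by omega⟩
    rw [row_top n hn β r] at h
    simp only [hBS, hβe, hre] at h
    rw [hrv0] at h
    exact h
  have hup : ∀ k, 1 ≤ k → k ≤ n-2 → βv (k+1) / Sv k * rv k = bv k := by
    intro k h1 h2
    simp only [hbvdef]
    rw [if_pos ⟨h1, h2⟩]
    ring
  have hdown : ∀ k, 1 ≤ k → k ≤ n-2 →
      βv k / Sv (k+1) * rv (k+1) = rv (k+1) - bv (k+1) := by
    intro k h1 h2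
    by_cases hk : k + 1 ≤ n-2
    · have hS : Sv (k+1) = βv k + βv (k+2) := by
        rw [hSvz (k+1) (by omega) hk]
        simp only [Nat.add_sub_cancel]
      have hSne : Sv (k+1) ≠ 0 := ne_of_gt (hSvpos (k+1))
      simp only [hbvdef]
      rw [if_pos ⟨by omega, hk⟩]
      rw [div_mul_eq_mul_div, div_eq_iff hSne]
      rw [hS]
      have hSne2 : βv k + βv (k+2) ≠ 0 := by rw [← hS]; exact hSne
      field_simp
      ring
    · have hk1 : k + 1 = n - 1 := by omega
      rw [hk1]
      simp only [hbvdef]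
      rw [if_neg (by omega)]
      have hS : Sv (n-1) = βv (n-2) := by
        simp only [hSvdef]; rw [if_neg (by omega), if_true]
      rw [show k = n-2 by omega, hS, div_self (ne_of_gt (hβvpos (n-2))), one_mul, sub_zero]
  have claim : ∀ m, m ≤ n-2 → rv (n-1-m) - bv (n-1-m) = 1 + bv (n-2-m) := by
    intro m
    induction m with
    | zero =>
      intro _
      simp only [Nat.sub_zero]
      rw [hbvtop]
      have h := hup (n-2) (by omega) (by omega)
      rw [show n-2+1 = n-1 by omega] at h
      rw [← h, ← hrow_top]
      ring
    | succ m ih =>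
      intro hm
      have ihh := ih (by omega)
      have hj1 : 1 ≤ n-2-m := by omega
      have hj2 : n-2-m ≤ n-2 := by omega
      rw [show n-1-m = (n-2-m)+1 by omega] at ihh
      rw [show n-1-(m+1) = n-2-m by omega, show n-2-(m+1) = (n-2-m)-1 by omega]
      have hemid := hrow_mid (n-2-m) hj1 hj2
      have hdj := hdown (n-2-m) hj1 hj2
      by_cases hjj : 2 ≤ n-2-m
      · have huj := hup ((n-2-m)-1) (by omega) (by omega)
        rw [show (n-2-m)-1+1 = n-2-m by omega] at huj
        rw [if_pos hjj, huj] at hemid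
        linarith
      · have hj0 : n-2-m = 1 := by omega
        rw [if_neg hjj] at hemid
        rw [hj0] at hemid hdj ihh ⊢
        rw [show (1:ℕ)-1 = 0 from rfl, hbv0]
        linarith
  have req : ∀ k, 1 ≤ k → k ≤ n-1 → rv k = 1 + bv (k-1) + bv k := by
    intro k h1 h2
    have h := claim (n-1-k) (by omega)
    rw [show n-1-(n-1-k) = k by omega, show n-2-(n-1-k) = k-1 by omega] at h
    linarith
  have huv : ∀ k, 1 ≤ k → k ≤ n-2 → 0 < βv (k+1) / Sv k ∧ βv (k+1) / Sv k < 1 := by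
    intro k h1 h2
    have hS := hSvz k h1 h2
    have h3 := hβvpos (k-1)
    have h4 := hβvpos (k+1)
    have hSpos := hSvpos k
    constructor
    · exact div_pos h4 hSpos
    · rw [div_lt_one hSpos, hS]; linarith
  have hbpos : ∀ k, 1 ≤ k → k ≤ n-2 → 0 < bv k := by
    intro k
    induction k using Nat.strong_induction_on with
    | _ k ihk =>
      intro h1 h2
      have hprev : 0 ≤ bv (k-1) := by
        by_cases hk1 : k = 1
        · rw [hk1]; rw [show (1:ℕ)-1 = 0 from rfl, hbv0]
        · exact le_of_lt (ihk (k-1) (by omega) (by omega) (by omega))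
      have hreq := req k h1 (by omega)
      have hu := huv k h1 h2
      have hbk : bv k = rv k * (βv (k+1) / Sv k) := by
        simp only [hbvdef]; rw [if_pos ⟨h1, h2⟩]
      have hpos : 0 < rv k := by
        have h5 : rv k * (1 - βv (k+1) / Sv k) = 1 + bv (k-1) := by
          rw [mul_sub, mul_one, ← hbk]; linarith
        nlinarith [hu.1, hu.2, hprev]
      rw [hbk]
      exact mul_pos hpos hu.1
  refine ⟨fun p => if (p:ℕ) = 0 ∨ (p:ℕ) = n-1 then 0 else bv (p:ℕ), ?_, ?_⟩
  · intro p _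
    simp only [tO]
    by_cases h : (p:ℕ) = 0 ∨ (p:ℕ) = n-1
    · rw [if_pos h, if_pos h]; rfl
    · rw [if_neg h, if_neg h]
      have := p.isLt
      exact hbpos (p:ℕ) (by omega) (by omega)
  · funext p
    rw [Ahat_apply]
    have hp := p.isLt
    have hpeta : r p = rv (p:ℕ) := by
      rw [← hre (p:ℕ) p.isLt]
    rcases Nat.lt_trichotomy (p:ℕ) 1 with h | h | h
    · rw [if_pos (by omega : (p:ℕ) = 0 ∨ (p:ℕ) = n-1), if_neg (by omega)]
      rw [hpeta, show (p:ℕ) = 0 by omega, hrv0]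
      norm_num
    · rw [if_neg (by omega), if_neg (by omega)]
      rw [hpeta, show (p:ℕ) = 1 by omega]
      have := req 1 (by omega) (by omega)
      rw [show (1:ℕ)-1 = 0 from rfl, hbv0] at this
      rw [this]
      ring
    · rcases Nat.lt_or_ge (p:ℕ) (n-1) with h2 | h2
      · rw [if_neg (by omega), if_pos (by omega)]
        rw [if_neg (show ¬(((⟨(p:ℕ)-1, lt_of_le_of_lt (Nat.sub_le _ _) p.isLt⟩ : Fin n):ℕ) = 0
          ∨ ((⟨(p:ℕ)-1, lt_of_le_of_lt (Nat.sub_le _ _) p.isLt⟩ : Fin n):ℕ) = n-1)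
          by simp only [Fin.val_mk]; omega)]
        simp only [Fin.val_mk]
        rw [hpeta, req (p:ℕ) (by omega) (by omega)]
        ring
      · rw [if_pos (by omega : (p:ℕ) = 0 ∨ (p:ℕ) = n-1), if_pos (by omega)]
        rw [if_neg (show ¬(((⟨(p:ℕ)-1, lt_of_le_of_lt (Nat.sub_le _ _) p.isLt⟩ : Fin n):ℕ) = 0
          ∨ ((⟨(p:ℕ)-1, lt_of_le_of_lt (Nat.sub_le _ _) p.isLt⟩ : Fin n):ℕ) = n-1)
          by simp only [Fin.val_mk]; omega)]
        simp only [Fin.val_mk]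
        rw [hpeta, show (p:ℕ) = n-1 by omega, req (n-1) (by omega) (by omega), hbvtop]
        ring

lemma solvable_mpr (n : ℕ) (hn : 3 ≤ n) (x : Fin n → ℝ) (hx : x ∈ Oset n) :
    Solvable (pathGraph n) ⟨n - 1, p1 n hn⟩ ⟨0, p0 n hn⟩ (Ahat n x) := by
  set bv : ℕ → ℝ := fun k => if h : k < n then x ⟨k,h⟩ else 0 with hbvdef
  have hbq : ∀ m (h : m < n), x ⟨m, h⟩ = bv m := fun m h => by
    simp only [hbvdef, dif_pos h]
  have hbv0 : bv 0 = 0 := by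
    rw [← hbq 0 (by omega)]
    have := hx ⟨0, by omega⟩ (mem_univ _)
    simpa [tO] using this
  have hbvtop : bv (n-1) = 0 := by
    rw [← hbq (n-1) (by omega)]
    have := hx ⟨n-1, by omega⟩ (mem_univ _)
    simpa [tO] using this
  have hbvpos : ∀ k, 1 ≤ k → k ≤ n-2 → 0 < bv k := by
    intro k h1 h2
    rw [← hbq k (by omega)]
    have := hx ⟨k, by omega⟩ (mem_univ _)
    simp only [tO] at this
    rw [if_neg (by omega)] at this
    exact this
  have hbvnn : ∀ k, 0 ≤ bv k := by
    intro k
    by_cases h : k < n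
    · by_cases h0 : k = 0
      · rw [h0, hbv0]
      by_cases ht : k = n-1
      · rw [ht, hbvtop]
      · exact le_of_lt (hbvpos k (by omega) (by omega))
    · simp only [hbvdef, dif_neg h]; exact le_refl 0
  have hbpos : ∀ j, j ≤ n-1 → 0 < betaN bv j := by
    intro j
    induction j using Nat.strong_induction_on with
    | _ j ihj =>
      intro hj
      match j with
      | 0 => exact one_pos
      | 1 => exact one_pos
      | (i+2) =>
        rw [show betaN bv (i+2) = betaN bv i * bv (i+1) / (1 + bv i) from rfl]
        have h1 := ihj i (by omega) (by omega)
        have h2 := hbvpos (i+1) (by omega) (by omega)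
        have h3 := hbvnn i
        positivity
  have hK : ∀ j, 1 ≤ j → j ≤ n-2 → betaN bv (j+1) * (1 + bv (j-1)) = betaN bv (j-1) * bv j := by
    intro j h1 h2
    have hne : (1 : ℝ) + bv (j-1) ≠ 0 := by have := hbvnn (j-1); linarith
    rcases Nat.lt_or_ge j 2 with hj | hj
    · have hj1 : j = 1 := by omega
      subst hj1
      rw [show (1:ℕ)-1 = 0 from rfl]
      rw [show betaN bv 2 = betaN bv 0 * bv 1 / (1 + bv 0) from rfl]
      rw [hbv0]
      norm_num
    · obtain ⟨i, rfl⟩ : ∃ i, j = i + 2 := ⟨j - 2, by omega⟩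
      rw [show i+2-1 = i+1 by omega] at hne ⊢
      rw [show i+2+1 = (i+1)+2 by omega,
        show betaN bv ((i+1)+2) = betaN bv (i+1) * bv (i+1+1) / (1 + bv (i+1)) from rfl,
        show i+1+1 = i+2 by omega]
      rw [div_mul_cancel₀ _ hne]
  set β : Fin n → ℝ := fun p => betaN bv (p:ℕ) with hβdef
  set rv : ℕ → ℝ := fun k => if h : k < n then Ahat n x ⟨k,h⟩ else 0 with hrvdef
  have hre : ∀ m (h : m < n), Ahat n x ⟨m, h⟩ = rv m := fun m h => by
    simp only [hrvdef, dif_pos h]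
  have hrv0 : rv 0 = 1 := by
    rw [← hre 0 (by omega), Ahat_apply, if_neg (by simp only [Fin.val_mk]; omega)]
    rw [show x ⟨0, by omega⟩ = bv 0 from hbq 0 (by omega), hbv0]
    norm_num
  have hrv : ∀ k, 1 ≤ k → k ≤ n-1 → rv k = 1 + bv (k-1) + bv k := by
    intro k h1 h2
    rw [← hre k (by omega), Ahat_apply]
    simp only [Fin.val_mk]
    rw [hbq k (by omega)]
    by_cases hk2 : 2 ≤ k
    · rw [if_pos hk2, hbq (k-1) (by omega)]
      ring
    · rw [if_neg hk2, show k = 1 by omega, show (1:ℕ)-1 = 0 from rfl, hbv0]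
      ring
  have hβe : ∀ m (h : m < n), β ⟨m, h⟩ = betaN bv m := fun m h => rfl
  set Sv : ℕ → ℝ := fun k => if k = 0 then betaN bv 1 else if k = n-1 then betaN bv (n-2)
    else betaN bv (k-1) + betaN bv (k+1) with hSvdef
  have hSvz : ∀ k, 1 ≤ k → k ≤ n-2 → Sv k = betaN bv (k-1) + betaN bv (k+1) := by
    intro k h1 h2
    simp only [hSvdef]
    rw [if_neg (by omega), if_neg (by omega)]
  have hSvpos : ∀ k, k ≤ n-1 → 0 < Sv k := by
    intro k hk
    simp only [hSvdef]
    split_ifs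
    · exact hbpos 1 (by omega)
    · exact hbpos (n-2) (by omega)
    · have := hbpos (k-1) (by omega); have := hbpos (k+1) (by omega); linarith
  have hBS : ∀ m (h : m < n), Bsum n β ⟨m, h⟩ = Sv m := by
    intro m h
    by_cases hm0 : m = 0
    · subst hm0
      rw [Bsum_0 n hn β, hβe 1 (by omega)]
      simp only [hSvdef]
      rw [if_true]
    by_cases hmt : m = n-1
    · subst hmt
      rw [Bsum_top n hn β, hβe (n-2) (by omega)]
      simp only [hSvdef]
      rw [if_neg (by omega), if_true]
    · rw [Bsum_mid n hn β m (by omega) (by omega), hβe (m-1) (by omega), hβe (m+1) (by omega)]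
      exact (hSvz m (by omega) (by omega)).symm
  have hup : ∀ k, 1 ≤ k → k ≤ n-2 → betaN bv (k+1) / Sv k * rv k = bv k := by
    intro k h1 h2
    have hS := hSvz k h1 h2
    have hSpos := hSvpos k (by omega)
    rw [div_mul_eq_mul_div, div_eq_iff (ne_of_gt hSpos), hS, hrv k h1 (by omega)]
    linear_combination hK k h1 h2
  have hdown : ∀ k, 1 ≤ k → k ≤ n-2 → betaN bv k / Sv (k+1) * rv (k+1) = 1 + bv k := by
    intro k h1 h2
    by_cases hk : k + 1 ≤ n-2
    · have hS : Sv (k+1) = betaN bv k + betaN bv (k+2) := by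
        rw [hSvz (k+1) (by omega) hk]
        simp only [Nat.add_sub_cancel]
      have hSpos := hSvpos (k+1) (by omega)
      rw [div_mul_eq_mul_div, div_eq_iff (ne_of_gt hSpos), hS, hrv (k+1) (by omega) (by omega)]
      simp only [Nat.add_sub_cancel]
      have hKk := hK (k+1) (by omega) (by omega)
      simp only [Nat.add_sub_cancel] at hKk
      rw [show k+1+1 = k+2 by omega] at hKk
      linear_combination -hKk
    · have hk1 : k + 1 = n - 1 := by omega
      rw [hk1]
      have hS : Sv (n-1) = betaN bv (n-2) := by
        simp only [hSvdef]; rw [if_neg (by omega), if_true]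
      rw [hS, show k = n-2 by omega, div_self (ne_of_gt (hbpos (n-2) (by omega))), one_mul]
      rw [hrv (n-1) (by omega) (by omega), hbvtop, show n-1-1 = n-2 by omega]
      ring
  refine ⟨β, ?_, ?_, ?_⟩
  · intro p
    simp only [hβdef]
    exact hbpos (p:ℕ) (by have := p.isLt; omega)
  · funext p
    have hp := p.isLt
    have hpeta : Ahat n x p = rv (p:ℕ) := by
      rw [← hre (p:ℕ) p.isLt]
    rcases Nat.lt_trichotomy (p:ℕ) 1 with h | h | h
    · have hpeq : p = (⟨0, by omega⟩ : Fin n) := Fin.ext (by simp only [Fin.val_mk]; omega)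
      rw [hpeq, row_0 n hn β (Ahat n x)]
    · have hpeq : p = (⟨1, by omega⟩ : Fin n) := Fin.ext (by simp only [Fin.val_mk]; omega)
      rw [hpeq, row_mid n hn β (Ahat n x) 1 (by omega) (by omega)]
      rw [if_neg (by omega)]
      simp only [hBS, hβe, hre]
      rw [hdown 1 (by omega) (by omega), hrv 1 (by omega) (by omega),
        show (1:ℕ)-1 = 0 from rfl, hbv0]
      ring
    · rcases Nat.lt_or_ge (p:ℕ) (n-1) with h2 | h2
      · have hpeq : p = (⟨(p:ℕ), p.isLt⟩ : Fin n) := Fin.ext rfl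
        rw [hpeq, row_mid n hn β (Ahat n x) (p:ℕ) (by omega) (by omega)]
        rw [if_pos (by omega)]
        simp only [hBS, hβe, hre]
        have hu := hup ((p:ℕ)-1) (by omega) (by omega)
        rw [show (p:ℕ)-1+1 = (p:ℕ) by omega] at hu
        rw [hu, hdown (p:ℕ) (by omega) (by omega), hrv (p:ℕ) (by omega) (by omega)]
        ring
      · have hpeq : p = (⟨n-1, by omega⟩ : Fin n) := Fin.ext (by simp only [Fin.val_mk]; omega)
        rw [hpeq, row_top n hn β (Ahat n x)]
        simp only [hBS, hβe, hre]
        have hu := hup (n-2) (by omega) (by omega)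
        rw [show n-2+1 = n-1 by omega] at hu
        rw [hu, hrv0, hrv (n-1) (by omega) (by omega), hbvtop, show n-1-1 = n-2 by omega]
        ring
  · rw [show ((⟨0, by omega⟩ : Fin n)) = (⟨0, by omega⟩ : Fin n) from rfl]
    rw [← hrv0, ← hre 0 (by omega)]

lemma solvable_iff (n : ℕ) (hn : 3 ≤ n) (r : Fin n → ℝ) :
    Solvable (pathGraph n) ⟨n - 1, p1 n hn⟩ ⟨0, p0 n hn⟩ r ↔ r ∈ ⇑(Ahat n) '' Oset n := by
  constructor
  · exact solvable_mp n hn r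
  · rintro ⟨x, hx, rfl⟩
    exact solvable_mpr n hn x hx

end SPAux

/-- For the path graph on `v_1, …, v_n` with `vout = v_1`, `vin = v_n`, the equation
`τ_ρ = r` is solvable iff `r ∈ Ψ(G)`. -/
theorem solvable_iff_mem_Psi_pathGraph (n : ℕ) (hn : 3 ≤ n) (r : Fin n → ℝ) :
    Solvable (SimpleGraph.pathGraph n) ⟨n - 1, by omega⟩ ⟨0, by omega⟩ r ↔
      r ∈ Psi (SimpleGraph.pathGraph n) ⟨n - 1, by omega⟩ ⟨0, by omega⟩ := by
  have h1 : convexHull ℝ (⇑(SPAux.Ahat n) '' SPAux.Cset n) = ⇑(SPAux.Ahat n) '' SPAux.Dset n := by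
    rw [← SPAux.hullC n, ← AffineEquiv.coe_toAffineMap, AffineMap.image_convexHull]
  rw [SPAux.solvable_iff n hn r, Psi, SPAux.traceSet_eq n hn, h1,
    SPAux.image_intrinsic, SPAux.intrinsicD n hn]

end
end

section
/- Let G be a finite connected simple graph with distinguished vertices v_in ≠ v_out. Then for every proper walk ω from v_in to v_out and every vertex v ≠ v_out, the trace satisfies tr_ω(v) ≤ [v = v_in] + Σ_{w ∼ v, w ≠ v_out} tr_ω(w), where [v = v_in] equals 1 if v = v_in and 0 otherwise, and the sum is over neighbors w of v other than v_out. -/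
open scoped Classical

noncomputable section

theorem count_le_key {V : Type*} [Fintype V] [DecidableEq V]
    {G : SimpleGraph V} {vin vout : V}
    (ω : G.Walk vin vout) (hω : ω.support.count vout = 1) (v : V) (hv : v ≠ vout) :
    ω.support.count v ≤ (if v = vin then 1 else 0) +
      ∑ w ∈ Finset.univ.filter (fun w => G.Adj v w ∧ w ≠ vout), ω.support.count w := by
  classical
  set S := Finset.univ.filter (fun w => G.Adj v w ∧ w ≠ vout) with hS
  set M := (ω.darts.filter (fun d => d.snd = v)).map (fun d => d.fst) with hM
  have hdrop : vout ∉ ω.support.dropLast := by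
    intro hmem
    have h3 : 0 < ω.support.dropLast.count vout := List.count_pos_iff.mpr hmem
    have h2 : ω.support.count vout = ω.support.dropLast.count vout + 1 := by
      conv_lhs => rw [← ω.map_fst_darts_append]
      rw [List.count_append, ω.map_fst_darts]
      simp
    omega
  have hsplit : ω.support.count v = (if v = vin then 1 else 0) + M.length := by
    conv_lhs => rw [ω.support_eq_cons]
    rw [List.count_cons]
    have htail : ω.support.tail.count v = M.length := by
      rw [← ω.map_snd_darts, hM, List.length_map]
      simp only [List.count, List.countP_map, ← List.countP_eq_length_filter, Function.comp]
      congr 1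
    rw [htail]
    rcases eq_or_ne v vin with h | h
    · subst h; simp [Nat.add_comm]
    · simp [beq_iff_eq, Ne.symm h, h]
  have hcount_le : ∀ w, M.count w ≤ ω.support.count w := by
    intro w
    have s1 : M.Sublist (ω.darts.map (fun d => d.fst)) :=
      (List.filter_sublist).map _
    have s2 : (ω.darts.map (fun d => d.fst)).Sublist ω.support := by
      rw [ω.map_fst_darts]; exact List.dropLast_sublist _
    exact (s1.trans s2).count_le w
  have hmemS : ∀ a ∈ M, a ∈ S := by
    intro a ha
    rw [hM, List.mem_map] at ha
    obtain ⟨d, hd, rfl⟩ := ha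
    rw [List.mem_filter] at hd
    obtain ⟨hd1, hd2⟩ := hd
    have hd2' : d.snd = v := by simpa using hd2
    have hadj : G.Adj v d.fst := by
      have := d.adj
      rw [hd2'] at this
      exact this.symm
    have hfst : d.fst ≠ vout := by
      intro h
      apply hdrop
      rw [← ω.map_fst_darts]
      have : d.fst ∈ List.map (fun x => x.fst) ω.darts := List.mem_map_of_mem hd1
      rw [h] at this
      exact this
    rw [hS, Finset.mem_filter]
    exact ⟨Finset.mem_univ _, hadj, hfst⟩
  have hlen : M.length ≤ ∑ w ∈ S, ω.support.count w := by
    have h1 : ∑ w ∈ S, (M : Multiset V).count w = Multiset.card (M : Multiset V) :=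
      Multiset.sum_count_eq_card (fun a ha => hmemS a (by simpa using ha))
    simp only [Multiset.coe_count, Multiset.coe_card] at h1
    rw [← h1]
    exact Finset.sum_le_sum fun w _ => hcount_le w
  omega

/-- For every proper walk `ω` and vertex `v ≠ vout`, the number of visits to `v` is at most
`[v = vin]` plus the total number of visits to the neighbors of `v` other than `vout`. -/
theorem trace_le_sum_neighbors {V : Type*} [Fintype V] [DecidableEq V]
    (G : SimpleGraph V) (hG : G.Connected) (vin vout : V) (hne : vin ≠ vout)
    (ω : G.Walk vin vout) (hω : IsProper ω) (v : V) (hv : v ≠ vout) :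
    trace ω v ≤ (if v = vin then 1 else 0) +
      ∑ w ∈ Finset.univ.filter (fun w => G.Adj v w ∧ w ≠ vout), trace ω w := by
  have key := count_le_key ω hω v hv
  unfold trace
  have := (Nat.cast_le (α := ℝ)).mpr key
  push_cast at this
  convert this using 2 <;> simp

end
end
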